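/- The equation $\sinh(w) = w$ has infinitely many solutions $w \in \mathbb{C}$, and any sequence $(w_k)$ of distinct solutions satisfies $|\mathrm{Im}(w_k)| \to \infty$; moreover for solutions with large imaginary part, $\mathrm{Re}(w_k) = \log(2|\mathrm{Im}(w_k)|) + o(1)$ or $\mathrm{Re}(w_k) = -\log(2|\mathrm{Im}(w_k)|) + o(1)$. The only real solution is $w = 0$. -/

import Mathlib

open Filter


lemma sinhw_re (w : ℂ) : (Complex.sinh w).re = Real.sinh w.re * Real.cos w.im := by
  rw [← Complex.re_add_im w, Complex.sinh_add, Complex.sinh_mul_I, Complex.cosh_mul_I]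
  simp [Complex.sinh_ofReal_re, Complex.cos_ofReal_re]

lemma sinhw_im (w : ℂ) : (Complex.sinh w).im = Real.cosh w.re * Real.sin w.im := by
  rw [← Complex.re_add_im w, Complex.sinh_add, Complex.sinh_mul_I, Complex.cosh_mul_I]
  simp [Complex.cosh_ofReal_re, Complex.sin_ofReal_re]

lemma sol_sq {w : ℂ} (h : Complex.sinh w = w) :
    Real.sinh w.re ^ 2 + Real.sin w.im ^ 2 = w.re ^ 2 + w.im ^ 2 := by
  have h1 : Real.sinh w.re * Real.cos w.im = w.re := by rw [← sinhw_re, h]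
  have h2 : Real.cosh w.re * Real.sin w.im = w.im := by rw [← sinhw_im, h]
  have hc := Real.cosh_sq w.re
  have hs := Real.sin_sq_add_cos_sq w.im
  linear_combination (Real.sinh w.re * Real.cos w.im + w.re) * h1 +
    (Real.cosh w.re * Real.sin w.im + w.im) * h2 - Real.sin w.im ^ 2 * hc -
    Real.sinh w.re ^ 2 * hs

lemma sol_sq' {w : ℂ} (h : Complex.sinh w = w) :
    Real.sinh |w.re| ^ 2 + Real.sin w.im ^ 2 = |w.re| ^ 2 + w.im ^ 2 := by
  rcases abs_choice w.re with h' | h'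
  · rw [h']; exact sol_sq h
  · rw [h']; simpa [Real.sinh_neg] using sol_sq h

lemma sinh_nonneg' {t : ℝ} (ht : 0 ≤ t) : 0 ≤ Real.sinh t := by
  rw [← Real.sinh_zero]
  rcases ht.eq_or_lt with h | h
  · simp [← h]
  · exact (Real.sinh_lt_sinh.2 h).le

/-- a priori bounds for solutions with large imaginary part -/
lemma sol_bounds {w : ℂ} (h : Complex.sinh w = w) (hs : (100:ℝ) ≤ |w.im|) :
    |w.re| ^ 2 ≤ 16 * |w.im| ∧
    2 * |w.im| - 2 ≤ Real.exp |w.re| ∧ Real.exp |w.re| ≤ 2 * |w.im| + 16 := by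
  set t := |w.re| with htdef
  set s := |w.im| with hsdef
  have ht0 : 0 ≤ t := abs_nonneg _
  have hs0 : (0:ℝ) < s := by linarith
  have hkey : Real.sinh t ^ 2 + Real.sin w.im ^ 2 = t ^ 2 + s ^ 2 := by
    have h2 : Real.sinh t ^ 2 + Real.sin w.im ^ 2 = t ^ 2 + w.im ^ 2 := sol_sq' h
    rw [h2, hsdef, sq_abs, sq_abs]
  have hsin0 : 0 ≤ Real.sin w.im ^ 2 := sq_nonneg _
  have hsin1 : Real.sin w.im ^ 2 ≤ 1 := by
    have := Real.neg_one_le_sin w.im; have := Real.sin_le_one w.im; nlinarith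
  have hsh0 : 0 ≤ Real.sinh t := sinh_nonneg' ht0
  have hsh_le : Real.sinh t ≤ t + s := by nlinarith only [hkey, hsin0, hsh0, ht0, hs0, mul_nonneg ht0 hs0.le]
  have hexp_eq : Real.exp t = Real.sinh t + Real.cosh t := (Real.sinh_add_cosh t).symm
  have hch : Real.cosh t ^ 2 = Real.sinh t ^ 2 + 1 := Real.cosh_sq t
  have hch0 : (0:ℝ) < Real.cosh t := Real.cosh_pos t
  have hslec : Real.sinh t ≤ Real.cosh t := by nlinarith only [hch, hch0, hsh0]
  have hexp_le : Real.exp t ≤ 2 * t + 2 * s + 1 := by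
    have he : Real.exp (-t) ≤ 1 := Real.exp_le_one_iff.2 (by linarith)
    have hse : Real.sinh t = (Real.exp t - Real.exp (-t)) / 2 := Real.sinh_eq t
    linarith
  have hquad : (t/2+1)^2 ≤ Real.exp t := by
    have h := Real.add_one_le_exp (t/2)
    have h2 : Real.exp t = Real.exp (t/2)^2 := by rw [← Real.exp_nat_mul]; ring_nf
    nlinarith [Real.exp_pos (t/2)]
  have hstep1 : t ^ 2 ≤ 16 * s := by
    rcases le_or_gt t 8 with h8 | h8
    · nlinarith only [h8, ht0, hs]
    · nlinarith only [hquad, hexp_le, sq_nonneg (t-8), hs]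
  refine ⟨hstep1, ?_, ?_⟩
  · have h1 : (s - 1)^2 ≤ Real.sinh t ^ 2 := by nlinarith only [hkey, hsin1, sq_nonneg t, hs]
    have h2 : s - 1 ≤ Real.sinh t := by nlinarith only [h1, hsh0, hs]
    linarith
  · have h1 : Real.cosh t ^ 2 ≤ (s + 8)^2 := by nlinarith only [hch, hkey, hsin0, hstep1, hs]
    have h2 : Real.cosh t ≤ s + 8 := by nlinarith only [h1, hch0, hs]
    linarith
lemma part3 (ε : ℝ) (hε : 0 < ε) : ∃ M : ℝ, ∀ w : ℂ, Complex.sinh w = w →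
    M ≤ |w.im| → |(|w.re| - Real.log (2 * |w.im|))| < ε := by
  have hy1 : 0 < 1 - Real.exp (-ε) := by
    have : Real.exp (-ε) < 1 := Real.exp_lt_one_iff.2 (by linarith)
    linarith
  have hy2 : 0 < Real.exp ε - 1 := by
    have : 1 < Real.exp ε := Real.one_lt_exp_iff.2 hε
    linarith
  refine ⟨max 100 (max (1 / (1 - Real.exp (-ε)) + 1) (8 / (Real.exp ε - 1) + 1)), ?_⟩
  intro w h hM
  set s := |w.im| with hsdef
  set t := |w.re| with htdef
  have hs100 : (100:ℝ) ≤ s := le_trans (le_max_left _ _) hM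
  obtain ⟨-, hlow, hup⟩ := sol_bounds h hs100
  have hs0 : (0:ℝ) < s := by linarith
  have h2s : (0:ℝ) < 2 * s := by linarith
  have hA : 1 / (1 - Real.exp (-ε)) + 1 ≤ s :=
    le_trans (le_trans (le_max_left _ _) (le_max_right _ _)) hM
  have hB : 8 / (Real.exp ε - 1) + 1 ≤ s :=
    le_trans (le_trans (le_max_right _ _) (le_max_right _ _)) hM
  have hA' : 1 < s * (1 - Real.exp (-ε)) := by
    have h' : 1 / (1 - Real.exp (-ε)) ≤ s - 1 := by linarith
    rw [div_le_iff₀ hy1] at h'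
    nlinarith only [h', hy1]
  have hB' : 8 < s * (Real.exp ε - 1) := by
    have h' : 8 / (Real.exp ε - 1) ≤ s - 1 := by linarith
    rw [div_le_iff₀ hy2] at h'
    nlinarith only [h', hy2]
  have key1 : 2 * s * Real.exp (-ε) < Real.exp t := by nlinarith only [hlow, hA']
  have key2 : Real.exp t < 2 * s * Real.exp ε := by nlinarith only [hup, hB']
  have e1 : Real.log (2*s) - ε < t := by
    rw [← Real.exp_lt_exp, Real.exp_sub, Real.exp_log h2s]
    rw [Real.exp_neg] at key1
    rw [div_eq_mul_inv]; exact key1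
  have e2 : t < Real.log (2*s) + ε := by
    rw [← Real.exp_lt_exp, Real.exp_add, Real.exp_log h2s]
    exact key2
  rw [abs_sub_lt_iff]
  constructor <;> linarith
lemma finite_sol (C : ℝ) : {w : ℂ | Complex.sinh w = w ∧ |w.im| ≤ C}.Finite := by
  by_contra hinf
  rw [← Set.not_infinite, not_not] at hinf
  set S := {w : ℂ | Complex.sinh w = w ∧ |w.im| ≤ C} with hS
  -- S is bounded
  have hbd : S ⊆ Metric.closedBall 0 (8*|C| + 16 + |C|) := by
    intro w hw
    obtain ⟨h, him⟩ := hw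
    have him' : |w.im| ≤ |C| := le_trans him (le_abs_self C)
    have hre : |w.re| ≤ 8*|C| + 16 := by
      by_contra hre
      push_neg at hre
      set t := |w.re| with htdef
      have ht0 : (0:ℝ) ≤ t := abs_nonneg _
      have hkey : Real.sinh t ^ 2 + Real.sin w.im ^ 2 = t ^ 2 + w.im ^ 2 := sol_sq' h
      have hsin1 : Real.sin w.im ^ 2 ≤ 1 := by
        have := Real.neg_one_le_sin w.im; have := Real.sin_le_one w.im; nlinarith
      have h1 : Real.sinh t ≥ (Real.exp t - 1) / 2 := by
        rw [Real.sinh_eq]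
        have : Real.exp (-t) ≤ 1 := Real.exp_le_one_iff.2 (by linarith)
        linarith
      have hquad : (t/2+1)^2 ≤ Real.exp t := by
        have h := Real.add_one_le_exp (t/2)
        have h2 : Real.exp t = Real.exp (t/2)^2 := by rw [← Real.exp_nat_mul]; ring_nf
        nlinarith [Real.exp_pos (t/2)]
      have h2 : Real.sinh t ≥ t + |C| + 1 := by nlinarith only [h1, hquad, hre, abs_nonneg C]
      have h3 : w.im ^ 2 ≤ |C|^2 := by
        rw [← sq_abs w.im]; exact pow_le_pow_left₀ (abs_nonneg _) him' 2
      nlinarith only [hkey, hsin1, h2, h3, ht0, abs_nonneg C]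
    rw [Metric.mem_closedBall, dist_eq_norm]
    calc ‖w - 0‖ = ‖w‖ := by rw [sub_zero]
    _ ≤ |w.re| + |w.im| := Complex.norm_le_abs_re_add_abs_im w
    _ ≤ 8*|C| + 16 + |C| := by linarith
  obtain ⟨x₀, -, hacc⟩ := hinf.exists_accPt_of_subset_isCompact
    (isCompact_closedBall (0:ℂ) _) hbd
  have hfreq : ∃ᶠ z in nhdsWithin x₀ {x₀}ᶜ, Complex.sinh z - z = 0 := by
    rw [accPt_iff_frequently] at hacc
    rw [frequently_nhdsWithin_iff]
    refine hacc.mono fun z hz => ⟨?_, hz.1⟩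
    have := hz.2.1
    rw [this]; ring
  have hana : AnalyticOnNhd ℂ (fun z => Complex.sinh z - z) Set.univ := by
    apply DifferentiableOn.analyticOnNhd (s := Set.univ) _ isOpen_univ
    exact (Complex.differentiable_sinh.sub differentiable_id).differentiableOn
  have h0 := hana.eqOn_zero_of_preconnected_of_frequently_eq_zero
    isPreconnected_univ (Set.mem_univ x₀) hfreq
  have h2 := h0 (Set.mem_univ (2:ℂ))
  simp only [Pi.zero_apply, sub_eq_zero] at h2
  have : Complex.sinh ((2:ℝ):ℂ) = ((2:ℝ):ℂ) := by push_cast; exact h2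
  rw [← Complex.ofReal_sinh] at this
  have : Real.sinh 2 = 2 := by exact_mod_cast this
  have := Real.self_lt_sinh_iff.2 (by norm_num : (0:ℝ) < 2)
  linarith

lemma part2 (w : ℕ → ℂ) (hw : ∀ k, Complex.sinh (w k) = w k) (hinj : Function.Injective w) :
    Filter.Tendsto (fun k => |(w k).im|) Filter.atTop Filter.atTop := by
  rw [Filter.tendsto_atTop]
  intro C
  have hfin : {k : ℕ | ¬ C ≤ |(w k).im|}.Finite := by
    apply Set.Finite.subset (Set.Finite.preimage hinj.injOn (finite_sol C))
    intro k hk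
    exact ⟨hw k, (not_le.1 hk).le⟩
  have h := Filter.eventually_cofinite.2 hfin
  rwa [Nat.cofinite_eq_atTop] at h
lemma log_sub_log_le {a b : ℝ} (ha : 0 < a) (hb : 0 < b) :
    Real.log a - Real.log b ≤ a/b - 1 := by
  rw [← Real.log_div ha.ne' hb.ne']
  exact Real.log_le_sub_one_of_pos (by positivity)
lemma exists_sol' (x y a : ℝ) (hy : (10000:ℝ) ≤ y) (hx2 : (2:ℝ) ≤ x)
    (hxy : x ≤ y / 30) (hxdef : x = Real.log (2*y))
    (hea : Complex.exp ((a:ℂ) * Complex.I) = 1) (hay : y = a + Real.pi/2) :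
    ∃ w : ℂ, Complex.sinh w = w ∧ |w.im - y| ≤ 1 := by
  have hy0 : (0:ℝ) < y := by linarith
  have h2y0 : (0:ℝ) < 2*y := by linarith
  set c : ℂ := ⟨x, y⟩ with hcdef
  set S : Set ℂ := Metric.closedBall c 1 with hSdef
  set z : ℂ → ℂ := fun w => 2*w + Complex.exp (-w) with hzdef
  set Φ : ℂ → ℂ := fun w => Complex.log (z w) + ((a : ℝ) : ℂ) * Complex.I with hPdef
  -- coordinates of z w
  have hzre : ∀ w : ℂ, (z w).re = 2*w.re + (Complex.exp (-w)).re := by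
    intro w; simp [hzdef, Complex.add_re, Complex.mul_re]
  have hzim : ∀ w : ℂ, (z w).im = 2*w.im + (Complex.exp (-w)).im := by
    intro w; simp [hzdef, Complex.add_im, Complex.mul_im]
  -- basic bounds on points of S
  have hmem : ∀ w ∈ S, |w.re - x| ≤ 1 ∧ |w.im - y| ≤ 1 := by
    intro w hw
    rw [hSdef, Metric.mem_closedBall, dist_eq_norm] at hw
    constructor
    · calc |w.re - x| = |(w - c).re| := by rw [Complex.sub_re]
      _ ≤ ‖w - c‖ := Complex.abs_re_le_norm _
      _ ≤ 1 := hw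
    · calc |w.im - y| = |(w - c).im| := by rw [Complex.sub_im]
      _ ≤ ‖w - c‖ := Complex.abs_im_le_norm _
      _ ≤ 1 := hw
  have hexpbd : ∀ w ∈ S, ‖Complex.exp (-w)‖ ≤ 1 := by
    intro w hw
    obtain ⟨h1, -⟩ := hmem w hw
    rw [Complex.norm_exp, Complex.neg_re]
    apply Real.exp_le_one_iff.2
    have := (abs_le.1 h1).1
    linarith
  have hzre_lb : ∀ w ∈ S, 1 ≤ (z w).re := by
    intro w hw
    obtain ⟨h1, -⟩ := hmem w hw
    have h1' := abs_le.1 h1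
    have he : |(Complex.exp (-w)).re| ≤ 1 :=
      le_trans (Complex.abs_re_le_norm _) (hexpbd w hw)
    have he' := abs_le.1 he
    rw [hzre w]; linarith
  have hzim_lb : ∀ w ∈ S, y ≤ (z w).im := by
    intro w hw
    obtain ⟨-, h2⟩ := hmem w hw
    have h2' := abs_le.1 h2
    have he : |(Complex.exp (-w)).im| ≤ 1 :=
      le_trans (Complex.abs_im_le_norm _) (hexpbd w hw)
    have he' := abs_le.1 he
    rw [hzim w]; linarith
  have habs_lb : ∀ w ∈ S, y ≤ ‖z w‖ := fun w hw =>
    le_trans (hzim_lb w hw) (le_trans (le_abs_self _) (Complex.abs_im_le_norm _))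
  have hzne : ∀ w ∈ S, z w ≠ 0 := by
    intro w hw h0
    have := hzre_lb w hw
    rw [h0] at this; simp at this; linarith
  have hslit : ∀ w ∈ S, z w ∈ Complex.slitPlane :=
    fun w hw => Or.inl (by have := hzre_lb w hw; linarith)
  -- derivative
  have hderiv : ∀ w ∈ S, HasDerivAt Φ ((z w)⁻¹ * (2 - Complex.exp (-w))) w := by
    intro w hw
    have hz : HasDerivAt z (2 - Complex.exp (-w)) w := by
      have h1 : HasDerivAt (fun w : ℂ => 2*w) 2 w := by
        simpa using (hasDerivAt_id w).const_mul (2:ℂ)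
      have h2 : HasDerivAt (fun w : ℂ => Complex.exp (-w)) (-Complex.exp (-w)) w := by
        have := (Complex.hasDerivAt_exp (-w)).comp w (hasDerivAt_neg w)
        simpa [Function.comp_def] using this
      have := h1.add h2
      rw [sub_eq_add_neg]; exact this
    have hlog : HasDerivAt Complex.log (z w)⁻¹ (z w) := Complex.hasDerivAt_log (hslit w hw)
    have := (hlog.comp w hz).add_const (((a : ℝ) : ℂ) * Complex.I)
    simpa [hPdef, Function.comp] using this
  have hdbound : ∀ w ∈ S, ‖(z w)⁻¹ * (2 - Complex.exp (-w))‖ ≤ 3 / y := by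
    intro w hw
    rw [norm_mul, norm_inv]
    have h1 : ‖(2:ℂ) - Complex.exp (-w)‖ ≤ 3 := by
      have ha := norm_sub_le (2:ℂ) (Complex.exp (-w))
      have hb : ‖Complex.exp (-w)‖ ≤ 1 := by
        exact hexpbd w hw
      have hc : ‖(2:ℂ)‖ = 2 := by norm_num
      linarith
    have h2 : ‖z w‖ ≥ y := by simpa using habs_lb w hw
    have h3 : ‖(z w)‖⁻¹ ≤ y⁻¹ := by
      apply inv_anti₀ hy0 h2
    calc ‖z w‖⁻¹ * ‖(2:ℂ) - Complex.exp (-w)‖ ≤ y⁻¹ * 3 := by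
          apply mul_le_mul h3 h1 (norm_nonneg _) (by positivity)
    _ = 3 / y := by ring
  -- Lipschitz on S with constant 1/2
  have hlip : ∀ w1 ∈ S, ∀ w2 ∈ S, ‖Φ w1 - Φ w2‖ ≤ 3/y * ‖w1 - w2‖ := by
    intro w1 hw1 w2 hw2
    exact (convex_closedBall c 1).norm_image_sub_le_of_norm_hasDerivWithin_le
      (fun w hw => (hderiv w hw).hasDerivWithinAt)
      (fun w hw => hdbound w hw) hw2 hw1
  
  have hc_re : c.re = x := rfl
  have hc_im : c.im = y := rfl
  have hcS : c ∈ S := Metric.mem_closedBall_self zero_le_one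
  -- |z c| is close to 2y
  have habs_diff : ‖z c - (2*y : ℝ)*Complex.I‖ ≤ 2*x + 1 := by
    have heq : z c - (2*y : ℝ)*Complex.I = ((2*x : ℝ) : ℂ) + Complex.exp (-c) := by
      apply Complex.ext
      · rw [Complex.sub_re, hzre c, hc_re]
        simp
      · rw [Complex.sub_im, hzim c, hc_im]
        simp
    rw [heq]
    calc ‖((2*x : ℝ) : ℂ) + Complex.exp (-c)‖
        ≤ ‖((2*x : ℝ) : ℂ)‖ + ‖Complex.exp (-c)‖ := norm_add_le _ _
    _ ≤ 2*x + 1 := by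
        rw [Complex.norm_real, Real.norm_eq_abs]
        have h1 : |2*x| = 2*x := abs_of_nonneg (by linarith)
        have h2 := hexpbd c hcS
        linarith
  have habs2y : ‖(2*y : ℝ)*Complex.I‖ = 2*y := by
    rw [norm_mul, Complex.norm_I, Complex.norm_real, Real.norm_eq_abs, mul_one]
    exact abs_of_nonneg (by linarith)
  have hzc_both := abs_norm_sub_norm_le (z c) ((2*y : ℝ)*Complex.I)
  rw [habs2y] at hzc_both
  have hzc_both' := abs_le.1 hzc_both
  have hzc_ub : ‖z c‖ ≤ 2*y + 2*x + 1 := by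
    have := hzc_both'.2
    linarith [habs_diff]
  have hzc_lb : 2*y - (2*x + 1) ≤ ‖z c‖ := by
    have := hzc_both'.1
    linarith [habs_diff]
  have hzcy : y ≤ ‖z c‖ := habs_lb c hcS
  have hzc0 : (0:ℝ) < ‖z c‖ := by linarith
  -- real part estimate
  have hre_est : |Real.log (‖z c‖) - x| ≤ 1/4 := by
    have hbd : (2*x+1)/y ≤ 1/4 := by
      rw [div_le_iff₀ hy0]
      linarith [hxy, hy]
    rw [abs_le]
    constructor
    · have h1 : Real.log (2*y) - Real.log (‖z c‖) ≤ 2*y/(‖z c‖) - 1 :=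
        log_sub_log_le h2y0 hzc0
      have h2 : 2*y/(‖z c‖) - 1 = (2*y - ‖z c‖)/(‖z c‖) := by
        field_simp
      have h3 : (2*y - ‖z c‖)/(‖z c‖) ≤ (2*x+1)/y := by
        apply div_le_div₀ (by linarith) (by linarith) hy0 hzcy
      rw [hxdef]
      linarith
    · have h1 : Real.log (‖z c‖) - Real.log (2*y) ≤ ‖z c‖/(2*y) - 1 :=
        log_sub_log_le hzc0 h2y0
      have h2 : ‖z c‖/(2*y) - 1 = (‖z c‖ - 2*y)/(2*y) := by
        field_simp
      have h3 : (‖z c‖ - 2*y)/(2*y) ≤ (2*x+1)/y := by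
        apply div_le_div₀ (by linarith) (by linarith) hy0 (by linarith)
      rw [hxdef]
      linarith
  -- argument estimate
  have harg_ub : Complex.arg (z c) ≤ Real.pi/2 :=
    Complex.arg_le_pi_div_two_iff.2 (Or.inl (by linarith [hzre_lb c hcS]))
  have harg_lb : 0 ≤ Complex.arg (z c) :=
    Complex.arg_nonneg_iff.2 (by linarith [hzim_lb c hcS])
  have him_est : |Complex.arg (z c) - Real.pi/2| ≤ 1/4 := by
    set θ := Real.pi/2 - Complex.arg (z c) with hθdef
    have hθ0 : 0 ≤ θ := by simp [hθdef]; linarith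
    have hθpi : θ ≤ Real.pi/2 := by
      rw [hθdef]; linarith
    have hsin : Real.sin θ = (z c).re / ‖z c‖ := by
      rw [hθdef, Real.sin_pi_div_two_sub, Complex.cos_arg (hzne c hcS)]
    have hrebd : (z c).re ≤ 2*x + 1 := by
      rw [hzre c, hc_re]
      have := le_trans (Complex.abs_re_le_norm _) (hexpbd c hcS)
      have := (abs_le.1 this).2
      linarith
    have hsinbd : Real.sin θ ≤ (2*x+1)/y := by
      rw [hsin]
      apply div_le_div₀ (by linarith) hrebd hy0 hzcy
    have hms := Real.mul_le_sin hθ0 hθpi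
    have hsin0 : 0 ≤ Real.sin θ := by
      rw [hsin]
      apply div_nonneg _ hzc0.le
      linarith [hzre_lb c hcS]
    have hpi4 := Real.pi_le_four
    have hpi0 := Real.pi_pos
    have hsin8 : Real.sin θ ≤ 1/8 := by
      have h2 : (2*x+1)/y ≤ 1/8 := by
        rw [div_le_iff₀ hy0]
        linarith [hxy, hy]
      linarith [hsinbd]
    have hθle : θ ≤ (Real.pi/2) * Real.sin θ := by
      have := mul_le_mul_of_nonneg_left hms (by positivity : (0:ℝ) ≤ Real.pi/2)
      have heq : Real.pi/2 * (2/Real.pi * θ) = θ := by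
        field_simp
      linarith [heq ▸ this]
    have hθbd : θ ≤ 1/4 := by
      nlinarith [hθle, hsin0, hsin8, hpi4, hpi0]
    rw [abs_sub_comm, abs_of_nonneg (by linarith : (0:ℝ) ≤ Real.pi/2 - Complex.arg (z c))]
    exact hθbd
  -- center estimate
  have hPc_re : (Φ c - c).re = Real.log (‖z c‖) - x := by
    simp [hPdef, Complex.sub_re, Complex.add_re, Complex.log_re, hc_re]
  have hPc_im : (Φ c - c).im = Complex.arg (z c) - Real.pi/2 := by
    simp [hPdef, Complex.sub_im, Complex.add_im, Complex.log_im, hc_im, hay]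
    ring
  have hcenter : ‖Φ c - c‖ ≤ 1/2 := by
    calc ‖Φ c - c‖ ≤ |(Φ c - c).re| + |(Φ c - c).im| :=
        Complex.norm_le_abs_re_add_abs_im _
    _ ≤ 1/4 + 1/4 := by
        rw [hPc_re, hPc_im]
        exact add_le_add hre_est him_est
    _ = 1/2 := by norm_num
  -- maps S into S
  have h3y : 3/y ≤ 1/2 := by
    rw [div_le_iff₀ hy0]; linarith
  have hmaps : Set.MapsTo Φ S S := by
    intro w hw
    have hw1 : ‖w - c‖ ≤ 1 := by
      rw [hSdef, Metric.mem_closedBall, dist_eq_norm] at hw; exact hw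
    rw [hSdef, Metric.mem_closedBall, dist_eq_norm]
    have htri : ‖Φ w - c‖ ≤ ‖Φ w - Φ c‖ + ‖Φ c - c‖ := by
      have := norm_add_le (Φ w - Φ c) (Φ c - c)
      simpa using this
    have hl := hlip w hw c hcS
    have : 3/y * ‖w - c‖ ≤ 3/y * 1 :=
      mul_le_mul_of_nonneg_left hw1 (by positivity)
    calc ‖Φ w - c‖ ≤ 3/y * ‖w - c‖ + ‖Φ c - c‖ := by linarith
    _ ≤ 1/2 * 1 + 1/2 := by linarith
    _ = 1 := by norm_num
  -- contraction
  have hlipOn : LipschitzOnWith (1/2 : NNReal) Φ S := by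
    apply LipschitzOnWith.of_dist_le_mul
    intro a ha b hb
    rw [dist_eq_norm, dist_eq_norm]
    have h1 := hlip a ha b hb
    have h2 : 3/y * ‖a - b‖ ≤ 1/2 * ‖a - b‖ :=
      mul_le_mul_of_nonneg_right h3y (norm_nonneg _)
    have h3 : ((1/2 : NNReal) : ℝ) = 1/2 := by norm_num
    rw [h3]
    linarith
  have hcontr : ContractingWith (1/2 : NNReal) (hmaps.restrict Φ S S) := by
    constructor
    · rw [← NNReal.coe_lt_coe]
      push_cast
      norm_num
    · exact hmaps.lipschitzOnWith_iff_restrict.1 hlipOn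
  obtain ⟨w, hwS, hfix, -, -⟩ := ContractingWith.exists_fixedPoint'
    Metric.isClosed_closedBall.isComplete hmaps hcontr hcS (edist_ne_top _ _)
  refine ⟨w, ?_, (hmem w hwS).2⟩
  have hzw0 : z w ≠ 0 := hzne w hwS
  have hexpw : Complex.exp w = z w := by
    conv_lhs => rw [← hfix]
    rw [hPdef]
    simp only []
    rw [Complex.exp_add, Complex.exp_log hzw0, hea, mul_one]
  have hexpnw : Complex.exp (-w) = z w - 2*w := by
    rw [hzdef]; ring
  rw [Complex.sinh, hexpw, hexpnw]
  ring
lemma log2y_ge_two {y : ℝ} (hy : (10000:ℝ) ≤ y) : 2 ≤ Real.log (2*y) := by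
  have h2y0 : (0:ℝ) < 2*y := by linarith
  rw [Real.le_log_iff_exp_le h2y0]
  have h1 : Real.exp 2 = Real.exp 1 * Real.exp 1 := by
    rw [← Real.exp_add]; norm_num
  have h9 : Real.exp 1 * Real.exp 1 < 8 := by
    nlinarith [Real.exp_one_lt_d9, Real.exp_pos 1]
  nlinarith [h9, hy, h1]

lemma log2y_le {y : ℝ} (hy : (10000:ℝ) ≤ y) : Real.log (2*y) ≤ y / 30 := by
  have hy0 : (0:ℝ) < y := by linarith
  have h2y0 : (0:ℝ) < 2*y := by linarith
  have hs0 : (0:ℝ) < Real.sqrt (2*y) := Real.sqrt_pos.2 h2y0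
  have h1 : Real.log (2*y) = 2 * Real.log (Real.sqrt (2*y)) := by
    rw [Real.log_sqrt h2y0.le]; ring
  have h2 : Real.log (Real.sqrt (2*y)) ≤ Real.sqrt (2*y) - 1 :=
    Real.log_le_sub_one_of_pos hs0
  have h3 : Real.sqrt (2*y) ≤ y / 60 := by
    have h4 : Real.sqrt (2*y) ≤ Real.sqrt ((y/60)^2) := by
      apply Real.sqrt_le_sqrt
      nlinarith [hy, mul_nonneg (sub_nonneg.2 hy) hy0.le]
    rwa [Real.sqrt_sq (by positivity)] at h4
  linarith

lemma exists_sol (n : ℕ) (hn : (10000:ℝ) ≤ 2*Real.pi*n + Real.pi/2) :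
    ∃ w : ℂ, Complex.sinh w = w ∧ |w.im - (2*Real.pi*n + Real.pi/2)| ≤ 1 := by
  apply exists_sol' (Real.log (2*(2*Real.pi*n + Real.pi/2))) _ (2*Real.pi*n) hn
    (log2y_ge_two hn) (log2y_le hn) rfl ?_ (by ring)
  have h := Complex.exp_int_mul_two_pi_mul_I (n : ℤ)
  rw [← h]
  congr 1
  push_cast
  ring

lemma part1 : {w : ℂ | Complex.sinh w = w}.Infinite := by
  have hex : ∀ n : ℕ, ∃ w : ℂ, Complex.sinh w = w ∧
      |w.im - (2*Real.pi*((n:ℝ)+10000) + Real.pi/2)| ≤ 1 := by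
    intro n
    have hpi := Real.pi_gt_three
    have h : ∃ w : ℂ, Complex.sinh w = w ∧
        |w.im - (2*Real.pi*((n + 10000 : ℕ) : ℝ) + Real.pi/2)| ≤ 1 := by
      apply exists_sol (n + 10000)
      push_cast
      nlinarith [Nat.cast_nonneg (α := ℝ) n]
    obtain ⟨w, hw1, hw2⟩ := h
    exact ⟨w, hw1, by push_cast at hw2 ⊢; exact hw2⟩
  choose f hf1 hf2 using hex
  apply Set.infinite_of_injective_forall_mem (f := f) _
  · exact fun n => hf1 n
  intro a b hab
  by_contra hne
  have h2a := hf2 a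
  have h2b := hf2 b
  rw [hab] at h2a
  have h1 := abs_le.1 h2a
  have h2 := abs_le.1 h2b
  have hpi := Real.pi_gt_three
  rcases Nat.lt_or_ge a b with h | h
  · have hc : (a:ℝ) + 1 ≤ (b:ℝ) := by exact_mod_cast h
    nlinarith [h1.1, h1.2, h2.1, h2.2, hc,
      mul_nonneg (by linarith : (0:ℝ) ≤ Real.pi) (by linarith : (0:ℝ) ≤ (b:ℝ) - a - 1)]
  · have h' : b < a := lt_of_le_of_ne h (fun he => hne he.symm)
    have hc : (b:ℝ) + 1 ≤ (a:ℝ) := by exact_mod_cast h'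
    nlinarith [h1.1, h1.2, h2.1, h2.2, hc,
      mul_nonneg (by linarith : (0:ℝ) ≤ Real.pi) (by linarith : (0:ℝ) ≤ (a:ℝ) - b - 1)]
/-- `sinh w = w` has infinitely many complex solutions; any
injective sequence of solutions has `|Im| → ∞`; solutions with large
imaginary part satisfy `Re = ± log(2|Im|) + o(1)`; and the only real
solution is `w = 0`. -/
theorem sinh_eq_self_solutions :
    {w : ℂ | Complex.sinh w = w}.Infinite ∧
    (∀ w : ℕ → ℂ, (∀ k, Complex.sinh (w k) = w k) → Function.Injective w →
      Tendsto (fun k => |(w k).im|) atTop atTop) ∧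
    (∀ ε : ℝ, 0 < ε → ∃ M : ℝ, ∀ w : ℂ, Complex.sinh w = w →
      M ≤ |w.im| → |(|w.re| - Real.log (2 * |w.im|))| < ε) ∧
    (∀ x : ℝ, Real.sinh x = x → x = 0) := by
  refine ⟨part1, part2, part3, ?_⟩
  intro x hx
  by_contra h0
  rcases lt_or_gt_of_ne h0 with h | h
  · have := Real.sinh_lt_self_iff.2 h
    linarith
  · have := Real.self_lt_sinh_iff.2 h
    linarith
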